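/- For every finite connected simple graph G and every t ≥ 2, the maximum length of a cooling sequence in ILT_t(G) equals the maximum length of a cooling sequence in ILT_2(G). -/

import Mathlib

/-- A cooling sequence for `G`: a sequence `v : Fin k → V` of sources (the `i`-th source,
0-based, is chosen in round `i + 1`) such that each source is uncooled when chosen
(`dist (v i) (v j) > j - i` for `i < j` in 1-based indexing), and the sequence cannot be
extended: every vertex is cooled by the end of round `k + 1`. -/
def IsCoolingSeq {V : Type*} (G : SimpleGraph V) {k : ℕ} (v : Fin k → V) : Prop :=
  (∀ i j : Fin k, i < j → (j : ℕ) - (i : ℕ) < G.dist (v i) (v j)) ∧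
  (∀ u : V, ∃ i : Fin k, (i : ℕ) + 1 + G.dist (v i) u ≤ k + 1)

/-- The round in which the cooling process with sources `v` ends: the maximum over
vertices `u` of the first round in which `u` is cooled, `min_i (i + dist (v i) u)`
(1-based `i`). -/
noncomputable def coolTime {V : Type*} [Fintype V] (G : SimpleGraph V) {k : ℕ}
    (v : Fin k → V) : ℕ :=
  Finset.univ.sup fun u : V => sInf {m : ℕ | ∃ i : Fin k, m = (i : ℕ) + 1 + G.dist (v i) u}

/-- The cooling number of `G`: the maximum, over all cooling sequences of `G`, of the
round in which the cooling process ends. -/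
noncomputable def coolingNumber {V : Type*} [Fintype V] (G : SimpleGraph V) : ℕ :=
  sSup {T : ℕ | ∃ (k : ℕ) (v : Fin k → V), IsCoolingSeq G v ∧ T = coolTime G v}

/-- The Iterated Local Transitivity graph of `G`, on vertex set `V ⊕ V`, where `Sum.inr x`
is the clone of the original vertex `Sum.inl x`: clones are adjacent to their original
vertex and to its neighbors, and clones are pairwise non-adjacent. -/
def ILT {V : Type*} (G : SimpleGraph V) : SimpleGraph (V ⊕ V) :=
  SimpleGraph.fromRel fun a b =>
    match a, b with
    | Sum.inl x, Sum.inl y => G.Adj x y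
    | Sum.inl x, Sum.inr y => x = y ∨ G.Adj x y
    | Sum.inr x, Sum.inl y => x = y ∨ G.Adj x y
    | Sum.inr _, Sum.inr _ => False

/-- The vertex type of `ILT_t(G)`. -/
def ILTVert (V : Type*) : ℕ → Type _
  | 0 => V
  | t + 1 => ILTVert V t ⊕ ILTVert V t

instance ILTVert.fintype (V : Type*) [Fintype V] : ∀ t, Fintype (ILTVert V t)
  | 0 => inferInstanceAs (Fintype V)
  | t + 1 =>
    letI := ILTVert.fintype V t
    inferInstanceAs (Fintype (ILTVert V t ⊕ ILTVert V t))

/-- `ILTiter G t` is the result of `t` iterated applications of the ILT construction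
to `G`. -/
def ILTiter {V : Type*} (G : SimpleGraph V) : (t : ℕ) → SimpleGraph (ILTVert V t)
  | 0 => G
  | t + 1 => ILT (ILTiter G t)

/-- The maximum length of a cooling sequence of `G`. -/
noncomputable def maxCoolSeqLen {V : Type*} [Fintype V] (G : SimpleGraph V) : ℕ :=
  sSup {k : ℕ | ∃ v : Fin k → V, IsCoolingSeq G v}
section ILTProof
open SimpleGraph Sum

variable {V : Type*}

/-- projection of `ILT G` back to `G` -/
def prj : V ⊕ V → V := Sum.elim id id

@[simp] lemma prj_inl (x : V) : prj (inl x : V ⊕ V) = x := rfl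
@[simp] lemma prj_inr (x : V) : prj (inr x : V ⊕ V) = x := rfl

lemma ilt_adj_inl_inl {G : SimpleGraph V} {x y : V} (h : G.Adj x y) :
    (ILT G).Adj (inl x) (inl y) := by
  rw [ILT, SimpleGraph.fromRel_adj]
  exact ⟨by simp [h.ne], Or.inl h⟩

lemma ilt_adj_inl_inr {G : SimpleGraph V} {x y : V} (h : x = y ∨ G.Adj x y) :
    (ILT G).Adj (inl x) (inr y) := by
  rw [ILT, SimpleGraph.fromRel_adj]
  exact ⟨by simp, Or.inl h⟩

lemma ilt_adj_inr_inl {G : SimpleGraph V} {x y : V} (h : x = y ∨ G.Adj x y) :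
    (ILT G).Adj (inr x) (inl y) := by
  rw [ILT, SimpleGraph.fromRel_adj]
  exact ⟨by simp, Or.inl h⟩

lemma ilt_not_adj_inr_inr {G : SimpleGraph V} {x y : V} :
    ¬ (ILT G).Adj (inr x) (inr y) := by
  rw [ILT, SimpleGraph.fromRel_adj]
  rintro ⟨-, h | h⟩ <;> exact h

lemma ilt_adj_cases {G : SimpleGraph V} {a b : V ⊕ V} (h : (ILT G).Adj a b) :
    prj a = prj b ∨ G.Adj (prj a) (prj b) := by
  rw [ILT, SimpleGraph.fromRel_adj] at h
  obtain ⟨hne, h | h⟩ := h <;> rcases a with x | x <;> rcases b with y | y <;>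
    simp_all [prj] <;> tauto

end ILTProof

section ILTProof2
open SimpleGraph Sum

variable {V : Type*}

/-- `inl` as a graph homomorphism `G →g ILT G`. -/
def iltHomInl (G : SimpleGraph V) : G →g ILT G where
  toFun := inl
  map_rel' := fun h => ilt_adj_inl_inl h

lemma ilt_connected {G : SimpleGraph V} (hG : G.Connected) : (ILT G).Connected := by
  rw [connected_iff]
  refine ⟨fun a b => ?_, ⟨inl hG.nonempty.some⟩⟩
  have key : ∀ x : V ⊕ V, (ILT G).Reachable x (inl (prj x)) := by
    rintro (x | x)
    · exact Reachable.refl _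
    · exact (ilt_adj_inr_inl (Or.inl rfl)).reachable
  exact ((key a).trans ((hG.preconnected (prj a) (prj b)).map (iltHomInl G))).trans
    (key b).symm

lemma ilt_walk_proj {G : SimpleGraph V} {a b : V ⊕ V} (p : (ILT G).Walk a b) :
    ∃ q : G.Walk (prj a) (prj b), q.length ≤ p.length := by
  induction p with
  | nil => exact ⟨Walk.nil, le_rfl⟩
  | cons h p ih =>
    obtain ⟨q, hq⟩ := ih
    rcases ilt_adj_cases h with heq | hadj
    · exact ⟨q.copy heq.symm rfl, by simpa using Nat.le_succ_of_le hq⟩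
    · exact ⟨Walk.cons hadj q, by simpa using hq⟩

lemma ilt_dist_lower {G : SimpleGraph V} (hG : G.Connected) (a b : V ⊕ V) :
    G.dist (prj a) (prj b) ≤ (ILT G).dist a b := by
  obtain ⟨p, hp⟩ := (ilt_connected hG).exists_walk_length_eq_dist a b
  obtain ⟨q, hq⟩ := ilt_walk_proj p
  exact le_trans (SimpleGraph.dist_le q) (hp ▸ hq)

lemma ilt_walk_inl_inr {G : SimpleGraph V} : ∀ {x y : V} (p : G.Walk x y), x ≠ y →
    ∃ q : (ILT G).Walk (inl x) (inr y), q.length ≤ p.length := by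
  intro x y p
  induction p with
  | nil => exact fun h => absurd rfl h
  | @cons x z y h p ih =>
    intro _
    by_cases hz : z = y
    · subst hz
      exact ⟨Walk.cons (ilt_adj_inl_inr (Or.inr h)) Walk.nil, by simp⟩
    · obtain ⟨q, hq⟩ := ih hz
      exact ⟨Walk.cons (ilt_adj_inl_inl h) q, by simpa using hq⟩

lemma ilt_walk_inr_inr {G : SimpleGraph V} : ∀ {x y : V} (p : G.Walk x y), x ≠ y →
    ∃ q : (ILT G).Walk (inr x) (inr y), q.length ≤ max p.length 2 := by
  intro x y p
  induction p with
  | nil => exact fun h => absurd rfl h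
  | @cons x z y h p _ =>
    intro _
    by_cases hz : z = y
    · subst hz
      refine ⟨Walk.cons (ilt_adj_inr_inl (Or.inl rfl)) (Walk.cons (ilt_adj_inl_inr (Or.inr h)) Walk.nil), by simp⟩
    · obtain ⟨q, hq⟩ := ilt_walk_inl_inr p hz
      refine ⟨Walk.cons (ilt_adj_inr_inl (Or.inr h)) q, ?_⟩
      simp only [Walk.length_cons]
      exact le_max_of_le_left (by simpa using hq)

lemma ilt_dist_upper {G : SimpleGraph V} (hG : G.Connected) (a b : V ⊕ V) (hab : a ≠ b) :
    (ILT G).dist a b ≤ max (G.dist (prj a) (prj b)) 2 := by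
  rcases a with x | x <;> rcases b with y | y
  · obtain ⟨p, hp⟩ := hG.exists_walk_length_eq_dist x y
    refine le_max_of_le_left ?_
    have := SimpleGraph.dist_le (p.map (iltHomInl G))
    rw [Walk.length_map, hp] at this
    exact this
  · by_cases hxy : x = y
    · subst hxy
      refine le_max_of_le_right ?_
      have := SimpleGraph.dist_le (Walk.cons (ilt_adj_inl_inr (G := G) (x := x) (y := x) (Or.inl rfl)) Walk.nil)
      simpa using le_trans this (by norm_num)
    · obtain ⟨p, hp⟩ := hG.exists_walk_length_eq_dist x y
      obtain ⟨q, hq⟩ := ilt_walk_inl_inr p hxy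
      refine le_max_of_le_left ?_
      simpa [hp] using le_trans (SimpleGraph.dist_le q) hq
  · by_cases hxy : x = y
    · subst hxy
      refine le_max_of_le_right ?_
      have := SimpleGraph.dist_le (Walk.cons (ilt_adj_inr_inl (G := G) (x := x) (y := x) (Or.inl rfl)) Walk.nil)
      simpa using le_trans this (by norm_num)
    · obtain ⟨p, hp⟩ := hG.exists_walk_length_eq_dist y x
      obtain ⟨q, hq⟩ := ilt_walk_inl_inr p (fun h => hxy h.symm)
      refine le_max_of_le_left ?_
      have := le_trans (SimpleGraph.dist_le q.reverse) (by simpa using hq)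
      rw [SimpleGraph.dist_comm] at this ⊢
      simpa [hp, SimpleGraph.dist_comm] using this
  · have hxy : x ≠ y := fun h => hab (h ▸ rfl)
    obtain ⟨p, hp⟩ := hG.exists_walk_length_eq_dist x y
    obtain ⟨q, hq⟩ := ilt_walk_inr_inr p hxy
    simpa [hp] using le_trans (SimpleGraph.dist_le q) hq

lemma ilt_dist_two {G : SimpleGraph V} (hG : G.Connected) {x y : V ⊕ V}
    (hx : ∃ a, x = inr a) (hy : ∃ b, y = inr b) (hxy : x ≠ y) :
    2 ≤ (ILT G).dist x y := by
  obtain ⟨a, rfl⟩ := hx; obtain ⟨b, rfl⟩ := hy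
  have h0 : (ILT G).dist (inr a) (inr b) ≠ 0 :=
    Nat.pos_iff_ne_zero.mp ((ilt_connected hG).pos_dist_of_ne hxy)
  have h1 : (ILT G).dist (inr a) (inr b) ≠ 1 := by
    intro h
    exact ilt_not_adj_inr_inr (SimpleGraph.dist_eq_one_iff_adj.mp h)
  omega

end ILTProof2

section ILTProof3
open SimpleGraph Sum

variable {V : Type*}

/-- iterated projection `ILT_t(G) → G` -/
def PiIter (V : Type*) : ∀ t, ILTVert V t → V
  | 0 => id
  | t + 1 => fun a => PiIter V t (prj a)

/-- iterated `inl` embedding `G → ILT_t(G)` -/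
def embIter (V : Type*) : ∀ t, V → ILTVert V t
  | 0 => id
  | t + 1 => fun x => (Sum.inl (embIter V t x) : ILTVert V t ⊕ ILTVert V t)

@[simp] lemma PiIter_embIter (t : ℕ) (x : V) : PiIter V t (embIter V t x) = x := by
  induction t with
  | zero => rfl
  | succ t ih => simpa [PiIter, embIter] using ih

lemma iltiter_connected {G : SimpleGraph V} (hG : G.Connected) (t : ℕ) :
    (ILTiter G t).Connected := by
  induction t with
  | zero => exact hG
  | succ t ih => exact ilt_connected ih

lemma iltiter_dist_lower {G : SimpleGraph V} (hG : G.Connected) :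
    ∀ (t : ℕ) (a b : ILTVert V t),
      G.dist (PiIter V t a) (PiIter V t b) ≤ (ILTiter G t).dist a b := by
  intro t
  induction t with
  | zero => exact fun a b => le_rfl
  | succ t ih =>
    intro a b
    exact le_trans (ih (prj a) (prj b)) (ilt_dist_lower (iltiter_connected hG t) a b)

lemma iltiter_dist_upper {G : SimpleGraph V} (hG : G.Connected) :
    ∀ (t : ℕ) (a b : ILTVert V (t + 1)), a ≠ b →
      (ILTiter G (t + 1)).dist a b ≤ max (G.dist (PiIter V (t + 1) a) (PiIter V (t + 1) b)) 2 := by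
  intro t
  induction t with
  | zero => exact fun a b hab => ilt_dist_upper hG a b hab
  | succ t ih =>
    intro a b hab
    have h1 := ilt_dist_upper (iltiter_connected hG (t + 1)) a b hab
    by_cases hp : prj a = prj b
    · refine le_trans h1 (le_trans ?_ (le_max_right _ _))
      have : (ILTiter G (t + 1)).dist (prj a) (prj b) = 0 := by
        rw [hp]; exact SimpleGraph.dist_self
      simp [this]
    · refine le_trans h1 (max_le (le_trans (ih (prj a) (prj b) hp) ?_) (le_max_right _ _))
      exact max_le (le_max_left _ _) (le_max_right _ _)

end ILTProof3

section ILTProof4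
open SimpleGraph Sum

variable {V : Type*}

/-- the separation condition (first half of `IsCoolingSeq`) -/
def SepSeq (G : SimpleGraph V) {k : ℕ} (v : Fin k → V) : Prop :=
  ∀ i j : Fin k, i < j → (j : ℕ) - (i : ℕ) < G.dist (v i) (v j)

lemma SepSeq.injective {G : SimpleGraph V} {k : ℕ} {v : Fin k → V} (h : SepSeq G v) :
    Function.Injective v := by
  intro i j hij
  by_contra hne
  rcases lt_or_gt_of_ne (fun he : i = j => hne he) with hlt | hlt
  · have := h i j hlt
    rw [hij, SimpleGraph.dist_self] at this
    omega
  · have := h j i hlt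
    rw [hij, SimpleGraph.dist_self] at this
    omega

lemma SepSeq.card_le {G : SimpleGraph V} [Fintype V] {k : ℕ} {v : Fin k → V} (h : SepSeq G v) :
    k ≤ Fintype.card V := by
  simpa using Fintype.card_le_of_injective v h.injective

/-- any separated sequence extends to a cooling sequence of at least its length -/
lemma sep_extends {G : SimpleGraph V} [Fintype V] :
    ∀ (n k : ℕ) (v : Fin k → V), SepSeq G v → Fintype.card V ≤ k + n →
      ∃ (k' : ℕ) (w : Fin k' → V), k ≤ k' ∧ IsCoolingSeq G w := by
  intro n
  induction n with
  | zero =>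
    intro k v hv hcard
    refine ⟨k, v, le_rfl, hv, fun u => ?_⟩
    by_contra hu
    push_neg at hu
    set v' : Fin (k + 1) → V := fun i => if h : (i : ℕ) < k then v ⟨i, h⟩ else u with hv'
    have hsep : SepSeq G v' := by
      intro i j hij
      have hik : (i : ℕ) < k := lt_of_lt_of_le (Fin.lt_iff_val_lt_val.mp hij) (Nat.lt_succ_iff.mp j.isLt)
      by_cases hjk : (j : ℕ) < k
      · simp only [hv', dif_pos hik, dif_pos hjk]
        exact hv ⟨i, hik⟩ ⟨j, hjk⟩ (Fin.mk_lt_mk.mpr hij)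
      · have hj : (j : ℕ) = k := by omega
        simp only [hv', dif_pos hik, dif_neg hjk]
        have := hu ⟨i, hik⟩
        simp only at this
        omega
    have := hsep.card_le
    omega
  | succ n ih =>
    intro k v hv hcard
    by_cases hext : ∀ u : V, ∃ i : Fin k, (i : ℕ) + 1 + G.dist (v i) u ≤ k + 1
    · exact ⟨k, v, le_rfl, hv, hext⟩
    · push_neg at hext
      obtain ⟨u, hu⟩ := hext
      set v' : Fin (k + 1) → V := fun i => if h : (i : ℕ) < k then v ⟨i, h⟩ else u with hv'
      have hsep : SepSeq G v' := by
        intro i j hij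
        have hik : (i : ℕ) < k := lt_of_lt_of_le (Fin.lt_iff_val_lt_val.mp hij) (Nat.lt_succ_iff.mp j.isLt)
        by_cases hjk : (j : ℕ) < k
        · simp only [hv', dif_pos hik, dif_pos hjk]
          exact hv ⟨i, hik⟩ ⟨j, hjk⟩ (Fin.mk_lt_mk.mpr hij)
        · have hj : (j : ℕ) = k := by omega
          simp only [hv', dif_pos hik, dif_neg hjk]
          have := hu ⟨i, hik⟩
          simp only at this
          omega
      obtain ⟨k', w, hk', hw⟩ := ih (k + 1) v' hsep (by omega)
      exact ⟨k', w, by omega, hw⟩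

end ILTProof4

section ILTProof5
open SimpleGraph Sum

variable {V : Type*}

/-- the invariant set of lengths: sequences in `G` whose distance condition is required
only for index gaps at least 2 -/
def NSet (G : SimpleGraph V) : Set ℕ :=
  {k | ∃ u : Fin k → V, ∀ i j : Fin k, (i : ℕ) + 2 ≤ (j : ℕ) →
    (j : ℕ) - (i : ℕ) < G.dist (u i) (u j)}

lemma zero_mem_nset (G : SimpleGraph V) : 0 ∈ NSet G :=
  ⟨Fin.elim0, fun i => i.elim0⟩

lemma nset_bdd (G : SimpleGraph V) [Fintype V] : BddAbove (NSet G) := by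
  refine ⟨2 * Fintype.card V, fun k hk => ?_⟩
  obtain ⟨u, hu⟩ := hk
  have hinj : Function.Injective (fun i : Fin k => (u i, decide ((i : ℕ) % 2 = 0))) := by
    intro i j hij
    simp only [Prod.mk.injEq, decide_eq_decide] at hij
    by_contra hne
    have hne' : (i : ℕ) ≠ (j : ℕ) := fun h => hne (Fin.ext h)
    rcases Nat.lt_or_ge (i : ℕ) (j : ℕ) with hlt | hge
    · have h2 : (i : ℕ) + 2 ≤ (j : ℕ) := by omega
      have := hu i j h2
      rw [hij.1, SimpleGraph.dist_self] at this
      omega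
    · have h2 : (j : ℕ) + 2 ≤ (i : ℕ) := by omega
      have := hu j i h2
      rw [hij.1, SimpleGraph.dist_self] at this
      omega
  have := Fintype.card_le_of_injective _ hinj
  rw [Fintype.card_fin, Fintype.card_prod, Fintype.card_bool] at this
  omega

/-- projecting any separated sequence of `ILT_{t+1}(G)` gives a member of `NSet G` -/
lemma proj_mem_nset {G : SimpleGraph V} (hG : G.Connected) (t k : ℕ)
    (v : Fin k → ILTVert V (t + 1)) (hv : SepSeq (ILTiter G (t + 1)) v) :
    k ∈ NSet G := by
  refine ⟨fun i => PiIter V (t + 1) (v i), ?_⟩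
  intro i j hij
  show (j : ℕ) - (i : ℕ) < G.dist (PiIter V (t + 1) (v i)) (PiIter V (t + 1) (v j))
  have hlt : i < j := Fin.lt_iff_val_lt_val.mpr (by omega)
  have h1 := hv i j hlt
  have hne : v i ≠ v j := by
    intro he
    rw [he, SimpleGraph.dist_self] at h1
    omega
  have h2 := iltiter_dist_upper hG t (v i) (v j) hne
  rcases max_choice (G.dist (PiIter V (t + 1) (v i)) (PiIter V (t + 1) (v j))) 2 with hm | hm <;>
    rw [hm] at h2 <;> omega

/-- any member of `NSet G` is realized by a separated sequence of `ILT_{s+2}(G)` -/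
lemma lift_sep {G : SimpleGraph V} (hG : G.Connected) (s k : ℕ) (u : Fin k → V)
    (hu : ∀ i j : Fin k, (i : ℕ) + 2 ≤ (j : ℕ) → (j : ℕ) - (i : ℕ) < G.dist (u i) (u j)) :
    ∃ w : Fin k → ILTVert V (s + 2), SepSeq (ILTiter G (s + 2)) w := by
  classical
  set a : Fin k → ILTVert V (s + 1) := fun i =>
    if (i : ℕ) % 2 = 0 then (Sum.inl (embIter V s (u i)) : ILTVert V s ⊕ ILTVert V s)
    else Sum.inr (embIter V s (u i)) with ha
  set w : Fin k → ILTVert V (s + 2) := fun i =>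
    (Sum.inr (a i) : ILTVert V (s + 1) ⊕ ILTVert V (s + 1)) with hwdef
  have hPi : ∀ i, PiIter V (s + 2) (w i) = u i := by
    intro i
    by_cases h : (i : ℕ) % 2 = 0 <;>
      simp [hwdef, ha, h, PiIter] <;> exact PiIter_embIter s (u i)
  refine ⟨w, fun i j hij => ?_⟩
  have hij' : (i : ℕ) < (j : ℕ) := Fin.lt_iff_val_lt_val.mp hij
  rcases Nat.lt_or_ge ((i : ℕ) + 1) (j : ℕ) with hgap | hcons
  · have := hu i j (by omega)
    have hl := iltiter_dist_lower hG (s + 2) (w i) (w j)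
    rw [hPi, hPi] at hl
    omega
  · -- consecutive: j = i + 1
    have hj : (j : ℕ) = (i : ℕ) + 1 := by omega
    have hane : a i ≠ a j := by
      by_cases h : (i : ℕ) % 2 = 0
      · have h' : ¬ ((j : ℕ) % 2 = 0) := by omega
        simp [ha, h, h']
        exact Sum.inl_ne_inr
      · have h' : (j : ℕ) % 2 = 0 := by omega
        simp [ha, h, h']
        exact Sum.inr_ne_inl
    have h2 : 2 ≤ (ILT (ILTiter G (s + 1))).dist
        (Sum.inr (a i) : ILTVert V (s + 1) ⊕ ILTVert V (s + 1)) (Sum.inr (a j)) :=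
      ilt_dist_two (iltiter_connected hG (s + 1)) ⟨a i, rfl⟩ ⟨a j, rfl⟩
        (fun h => hane (Sum.inr_injective h))
    have h2' : 2 ≤ (ILTiter G (s + 2)).dist (w i) (w j) := h2
    omega

lemma maxCool_eq_nsup {G : SimpleGraph V} [Fintype V] (hG : G.Connected) (t : ℕ)
    (ht : 2 ≤ t) : maxCoolSeqLen (ILTiter G t) = sSup (NSet G) := by
  obtain ⟨s, rfl⟩ : ∃ s, t = s + 2 := ⟨t - 2, by omega⟩
  have hSdef : maxCoolSeqLen (ILTiter G (s + 2)) =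
      sSup {k : ℕ | ∃ v : Fin k → ILTVert V (s + 2), IsCoolingSeq (ILTiter G (s + 2)) v} := rfl
  set S := {k : ℕ | ∃ v : Fin k → ILTVert V (s + 2), IsCoolingSeq (ILTiter G (s + 2)) v} with hS
  have hSbdd : BddAbove S := by
    refine ⟨Fintype.card (ILTVert V (s + 2)), fun k hk => ?_⟩
    obtain ⟨v, hv⟩ := hk
    exact SepSeq.card_le (hv.1 : SepSeq (ILTiter G (s + 2)) v)
  rw [hSdef]
  apply le_antisymm
  · rcases Set.eq_empty_or_nonempty S with hSe | hSne
    · rw [hSe, csSup_empty]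
      exact Nat.zero_le _
    · obtain ⟨v, hv⟩ := Nat.sSup_mem hSne hSbdd
      exact le_csSup (nset_bdd G) (proj_mem_nset hG (s + 1) _ v hv.1)
  · obtain ⟨u, hu⟩ := Nat.sSup_mem ⟨0, zero_mem_nset G⟩ (nset_bdd G)
    obtain ⟨w, hw⟩ := lift_sep hG s _ u hu
    obtain ⟨k', w', hk', hcool⟩ :=
      sep_extends (Fintype.card (ILTVert V (s + 2))) _ w hw (by omega)
    exact le_trans hk' (le_csSup hSbdd ⟨w', hcool⟩)

end ILTProof5


/-- For every finite connected simple graph `G` and `t ≥ 2`, the maximum length of a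
cooling sequence of `ILT_t(G)` equals that of `ILT_2(G)`. -/
theorem maxCoolSeqLen_ILTiter {V : Type*} [Fintype V] (G : SimpleGraph V)
    (hG : G.Connected) (t : ℕ) (ht : 2 ≤ t) :
    maxCoolSeqLen (ILTiter G t) = maxCoolSeqLen (ILTiter G 2) := by
  rw [maxCool_eq_nsup hG t ht, maxCool_eq_nsup hG 2 le_rfl]
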